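/- Let ρ₁ < ρ₂ be positive reals and for t_s ∈ (0,1) define g(t_s) = 1/ρ₂ + ((ρ₂ − ρ₁)/(ρ₁ρ₂))·(e^{ρ₁ t_s} − 1)/(e^{ρ₁ t_s} − e^{ρ₂(t_s − 1)}). Then g extends continuously to [0,1] with g(0) = 1/ρ₂ and g(1) = 1/ρ₁, and g is strictly monotone increasing on [0,1]. -/

import Mathlib

/-- g extends continuously to [0,1] with g(0)=1/ρ₂, g(1)=1/ρ₁, and is strictly increasing. -/
theorem stmt_12 (ρ₁ ρ₂ : ℝ) (h₁ : 0 < ρ₁) (h₂ : 0 < ρ₂) (hlt : ρ₁ < ρ₂)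
    (g : ℝ → ℝ)
    (hg : ∀ ts : ℝ, g ts = 1/ρ₂ + (ρ₂ - ρ₁) / (ρ₁ * ρ₂) *
        ((Real.exp (ρ₁ * ts) - 1) / (Real.exp (ρ₁ * ts) - Real.exp (ρ₂ * (ts - 1))))) :
    ContinuousOn g (Set.Icc 0 1) ∧ g 0 = 1/ρ₂ ∧ g 1 = 1/ρ₁ ∧
      StrictMonoOn g (Set.Icc 0 1) := by
  have hden : ∀ t ∈ Set.Icc (0:ℝ) 1, Real.exp (ρ₂ * (t - 1)) < Real.exp (ρ₁ * t) := by
    rintro t ⟨ht0, ht1⟩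
    apply Real.exp_lt_exp.2
    rcases eq_or_lt_of_le ht0 with h | h
    · nlinarith
    · nlinarith
  have hdenpos : ∀ t ∈ Set.Icc (0:ℝ) 1,
      0 < Real.exp (ρ₁ * t) - Real.exp (ρ₂ * (t - 1)) :=
    fun t ht => sub_pos.2 (hden t ht)
  refine ⟨?_, ?_, ?_, ?_⟩
  · have hcont : ContinuousOn (fun ts : ℝ => 1/ρ₂ + (ρ₂ - ρ₁) / (ρ₁ * ρ₂) *
        ((Real.exp (ρ₁ * ts) - 1) / (Real.exp (ρ₁ * ts) - Real.exp (ρ₂ * (ts - 1)))))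
        (Set.Icc 0 1) := by
      apply ContinuousOn.add continuousOn_const
      apply ContinuousOn.mul continuousOn_const
      apply ContinuousOn.div
      · fun_prop
      · fun_prop
      · intro t ht; exact ne_of_gt (hdenpos t ht)
    exact hcont.congr fun t _ => hg t
  · rw [hg 0]; simp
  · rw [hg 1]
    have h1 : Real.exp (ρ₂ * (1 - 1)) = 1 := by norm_num
    have h2 : (1:ℝ) < Real.exp (ρ₁ * 1) := by
      nlinarith [Real.add_one_le_exp (ρ₁ * 1)]
    rw [h1]
    rw [div_self (by nlinarith)]
    field_simp
    ring
  · rintro x ⟨hx0, hx1⟩ y ⟨hy0, hy1⟩ hxy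
    rw [hg x, hg y]
    have hc : 0 < (ρ₂ - ρ₁) / (ρ₁ * ρ₂) := div_pos (by linarith) (by positivity)
    apply (add_lt_add_iff_left _).2
    apply mul_lt_mul_of_pos_left _ hc
    set ax := Real.exp (ρ₁ * x) with hax
    set ay := Real.exp (ρ₁ * y) with hay
    set bx := Real.exp (ρ₂ * (x - 1)) with hbx
    set by' := Real.exp (ρ₂ * (y - 1)) with hby
    have hDx : 0 < ax - bx := hdenpos x ⟨hx0, hx1⟩
    have hDy : 0 < ay - by' := hdenpos y ⟨hy0, hy1⟩
    rw [div_lt_div_iff₀ hDx hDy]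
    have haxy : ax < ay := Real.exp_lt_exp.2 (by nlinarith)
    have hbxy : bx < by' := Real.exp_lt_exp.2 (by nlinarith)
    have hax1 : 1 ≤ ax := Real.one_le_exp (by positivity)
    have hbx1 : bx < 1 := by
      rw [hbx, Real.exp_lt_one_iff]
      nlinarith
    have key1 : 0 < (1 - bx) * (ay - ax) := by nlinarith
    have key2 : 0 ≤ (ax - 1) * (by' - bx) := by nlinarith
    nlinarith
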